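/- Let k be an algebraically closed field and R an integral domain which is a finitely generated k-algebra, equipped with a faithful algebraic action s ↦ σ_s of the additive group (k,+) by k-algebra automorphisms. Then there exist s, s̃ ∈ k and f ∈ R such that σ_s̃(σ_s(f) − f) ≠ σ_s(f) − f. -/
import Mathlib

private lemma aux_poly_zero {k V : Type*} [Field k] [AddCommGroup V] [Module k V]
    {n : ℕ} {v : ℕ → V}
    (h : {t : k | ∑ i ∈ Finset.range n, t ^ i • v i = 0}.Infinite) (t : k) :
    ∑ i ∈ Finset.range n, t ^ i • v i = 0 := by
  rw [← Module.forall_dual_apply_eq_zero_iff k]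
  intro φ
  set p : Polynomial k := ∑ i ∈ Finset.range n, Polynomial.C (φ (v i)) * Polynomial.X ^ i with hp
  have heval : ∀ s : k, Polynomial.eval s p = φ (∑ i ∈ Finset.range n, s ^ i • v i) := by
    intro s
    rw [hp, Polynomial.eval_finset_sum, map_sum]
    refine Finset.sum_congr rfl fun i _ => ?_
    rw [map_smul, smul_eq_mul, Polynomial.eval_mul, Polynomial.eval_C,
      Polynomial.eval_pow, Polynomial.eval_X, mul_comm]
  have hzero : p = 0 := by
    apply Polynomial.eq_zero_of_infinite_isRoot
    apply h.mono
    intro s hs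
    simp only [Set.mem_setOf_eq] at hs ⊢
    rw [Polynomial.IsRoot, heval s, hs, map_zero]
  rw [← heval t, hzero, Polynomial.eval_zero]

private lemma aux_poly_const {k V : Type*} [Field k] [AddCommGroup V] [Module k V]
    {n : ℕ} {g : ℕ → V} {w : V}
    (h : {t : k | ∑ i ∈ Finset.range (n + 1), t ^ i • g i = w}.Infinite) (t : k) :
    ∑ i ∈ Finset.range (n + 1), t ^ i • g i = w := by
  set v : ℕ → V := fun i => if i = 0 then g 0 - w else g i with hv
  have hsum : ∀ s : k, ∑ i ∈ Finset.range (n + 1), s ^ i • v i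
      = (∑ i ∈ Finset.range (n + 1), s ^ i • g i) - w := by
    intro s
    rw [Finset.sum_range_succ', Finset.sum_range_succ']
    simp only [hv, Nat.succ_ne_zero, if_false, if_true, pow_zero, one_smul, reduceIte]
    abel
  have h0 : {t : k | ∑ i ∈ Finset.range (n + 1), t ^ i • v i = 0}.Infinite := by
    apply h.mono
    intro s hs
    simp only [Set.mem_setOf_eq] at hs ⊢
    rw [hsum s, hs, sub_self]
  have := aux_poly_zero h0 t
  rw [hsum t] at this
  exact sub_eq_zero.mp this

/-- A faithful algebraic action of the additive group `(k,+)` on the coordinate ring `R`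
of an irreducible affine variety admits `s, t ∈ k` and `f ∈ R` with
`σ_t (σ_s f - f) ≠ σ_s f - f`. -/
theorem exists_noninvariant_difference
    (k : Type*) [Field k] [IsAlgClosed k]
    (R : Type*) [CommRing R] [IsDomain R] [Algebra k R] [Algebra.FiniteType k R]
    (σ : k → (R ≃ₐ[k] R))
    (hzero : σ 0 = 1)
    (hadd : ∀ s t : k, σ (s + t) = σ s * σ t)
    (halg : ∀ f : R, ∃ (m : ℕ) (g : ℕ → R), ∀ s : k,
      σ s f = ∑ i ∈ Finset.range (m + 1), s ^ i • g i)
    (hfaithful : ∀ s : k, σ s = 1 → s = 0) :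
    ∃ (s t : k) (f : R), σ t (σ s f - f) ≠ σ s f - f := by
  by_contra hcon
  push_neg at hcon
  -- σ 1 is not the identity
  have h1 : ¬ ∀ f : R, σ 1 f = f := by
    intro hall
    have : (1 : k) = 0 := hfaithful 1 (by ext f; simpa using hall f)
    exact one_ne_zero this
  push_neg at h1
  obtain ⟨F, hcne⟩ := h1
  obtain ⟨c, hc⟩ : ∃ c : R, σ 1 F = F + c := ⟨σ 1 F - F, by ring⟩
  have cne : c ≠ 0 := by
    intro h
    apply hcne
    rw [hc, h, add_zero]
  -- key dichotomy: for every t, σ t F = F or σ t F = F - c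
  have hdic : ∀ t : k, σ t F = F ∨ σ t F = F - c := by
    intro t
    obtain ⟨d, hd⟩ : ∃ d : R, σ t F = F + d := ⟨σ t F - F, by ring⟩
    have htc : σ t c = c := by
      have := hcon 1 t F
      rw [hc, add_sub_cancel_left] at this
      exact this
    have e2 := hcon 1 t (F * F)
    have e3 := hcon 1 t (F * F * F)
    simp only [map_sub, map_mul, hc, map_add, hd, htc] at e2 e3
    have key : c * d * (c + d) = 0 := by
      linear_combination e3 + (-(3 : R) * F - d - c) * e2
    rcases mul_eq_zero.mp key with h' | h'
    · rcases mul_eq_zero.mp h' with h'' | h''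
      · exact absurd h'' cne
      · left; rw [hd, h'', add_zero]
    · right
      rw [hd]
      linear_combination h'
  -- polynomial expression for t ↦ σ t F
  obtain ⟨m, g, hg⟩ := halg F
  have hcover : ({t : k | σ t F = F} ∪ {t : k | σ t F = F - c}).Infinite := by
    apply Set.infinite_univ.mono
    intro t _
    exact hdic t
  rcases Set.infinite_union.mp hcover with hS | hS
  · -- σ t F = F for infinitely many t, hence for all t; contradicts σ 1 F ≠ F
    have hS' : {t : k | ∑ i ∈ Finset.range (m + 1), t ^ i • g i = F}.Infinite := by
      apply hS.mono
      intro t ht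
      simp only [Set.mem_setOf_eq] at ht ⊢
      rw [← hg t]; exact ht
    have := aux_poly_const hS' 1
    rw [← hg 1] at this
    exact hcne this
  · -- σ t F = F - c for infinitely many t, hence for all t; contradicts σ 0 F = F
    have hS' : {t : k | ∑ i ∈ Finset.range (m + 1), t ^ i • g i = F - c}.Infinite := by
      apply hS.mono
      intro t ht
      simp only [Set.mem_setOf_eq] at ht ⊢
      rw [← hg t]; exact ht
    have := aux_poly_const hS' 0
    rw [← hg 0, hzero] at this
    simp only [AlgEquiv.one_apply] at this
    apply cne
    linear_combination this
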